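/- Let d ≥ 1, γ > 0, g ≥ 0, and w = (w₁,…,w_d), u = (u₁,…,u_d) ∈ ℝ^d. Then γ^{−1}( [½‖w + √γ·u‖₂² + g‖w + √γ·u‖₁] − [½‖w‖₂² + g‖w‖₁] − ⟨√γ·u, w⟩ ) = ½‖u‖₂² + (g/√γ)·( Σ_{j=1}^d u_j·sgn(w_j)·1{w_j ≠ 0} + Σ_{j=1}^d |u_j|·1{w_j = 0} ) + γ^{−1}·g·Σ_{j : w_j ≠ 0} R_j, where for each j with w_j ≠ 0 the remainder R_j := 2∫₀^{−√γ u_j} ( 1{w_j ≤ s} − 1{w_j ≤ 0} ) ds satisfies |R_j| ≤ 2·1{ 0 < |w_j| ≤ √γ|u_j| }·( √γ|u_j| − |w_j| ). -/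
import Mathlib

open intervalIntegral MeasureTheory

lemma step_mono (a : ℝ) : Monotone (fun s : ℝ => if a ≤ s then (1:ℝ) else 0) := by
  intro x y hxy
  dsimp only
  split_ifs with h1 h2 <;> norm_num
  exact h2 (h1.trans hxy)

lemma step_int (a t : ℝ) :
    ∫ s in (0:ℝ)..t, (if a ≤ s then (1:ℝ) else 0) = max t a - max 0 a := by
  have key : ∀ x y : ℝ, x ≤ y →
      ∫ s in x..y, (if a ≤ s then (1:ℝ) else 0) = max y a - max x a := by
    intro x y hxy
    have hae : ∀ᵐ s : ℝ, s ≠ a := by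
      have : (volume : Measure ℝ) {a} = 0 := measure_singleton a
      filter_upwards [measure_eq_zero_iff_ae_notMem.mp this] with s hs
      simpa using hs
    rcases le_total y a with h | h
    · rw [max_eq_right h, max_eq_right (hxy.trans h), sub_self]
      apply intervalIntegral.integral_zero_ae
      filter_upwards [hae] with s hs hmem
      rw [if_neg]
      intro hle
      have : s ≤ y := by
        rcases Set.mem_uIoc.mp hmem with h' | h'
        · exact h'.2
        · exact h'.2.trans hxy
      exact hs (le_antisymm (this.trans h) hle)
    · rcases le_total a x with h2 | h2
      · rw [max_eq_left (h2.trans hxy), max_eq_left h2]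
        have : ∫ s in x..y, (if a ≤ s then (1:ℝ) else 0) = ∫ s in x..y, (1:ℝ) := by
          apply intervalIntegral.integral_congr_ae
          filter_upwards with s hmem
          rcases Set.mem_uIoc.mp hmem with h' | h'
          · exact if_pos (h2.trans h'.1.le)
          · exact if_pos (h2.trans (hxy.trans h'.1.le))
        rw [this, intervalIntegral.integral_const, smul_eq_mul, mul_one]
      · have h1 : ∫ s in x..a, (if a ≤ s then (1:ℝ) else 0) = 0 := by
          apply intervalIntegral.integral_zero_ae
          filter_upwards [hae] with s hs hmem
          rw [if_neg]
          intro hle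
          rcases Set.mem_uIoc.mp hmem with h' | h'
          · exact hs (le_antisymm h'.2 hle)
          · exact hs (le_antisymm (h'.2.trans h2) hle)
        have h2' : ∫ s in a..y, (if a ≤ s then (1:ℝ) else 0) = y - a := by
          have : ∫ s in a..y, (if a ≤ s then (1:ℝ) else 0) = ∫ s in a..y, (1:ℝ) := by
            apply intervalIntegral.integral_congr_ae
            filter_upwards with s hmem
            rcases Set.mem_uIoc.mp hmem with h' | h'
            · exact if_pos h'.1.le
            · exact if_pos (h.trans h'.1.le)
          rw [this, intervalIntegral.integral_const, smul_eq_mul, mul_one]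
        have hsplit := integral_add_adjacent_intervals
          ((step_mono a).intervalIntegrable (μ := volume) (a := x) (b := a))
          ((step_mono a).intervalIntegrable (μ := volume) (a := a) (b := y))
        rw [← hsplit, h1, h2', zero_add, max_eq_left h, max_eq_right h2]
  rcases le_total 0 t with h | h
  · exact key 0 t h
  · rw [integral_symm, key t 0 h]; ring

lemma R_eq (a t : ℝ) :
    (2:ℝ) * ∫ s in (0:ℝ)..t,
        ((if a ≤ s then (1:ℝ) else 0) - (if a ≤ 0 then (1:ℝ) else 0))
      = 2 * ((max t a - max 0 a) - (if a ≤ 0 then (1:ℝ) else 0) * t) := by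
  rw [intervalIntegral.integral_sub ((step_mono a).intervalIntegrable (μ := volume))
      intervalIntegrable_const, step_int, intervalIntegral.integral_const, smul_eq_mul]
  ring

lemma key1' (s g : ℝ) (hs : 0 < s) (a u R : ℝ)
    (hR : R = 2 * ((max (-(s * u)) a - max 0 a) - (if a ≤ 0 then (1:ℝ) else 0) * (-(s * u)))) :
    (s * s)⁻¹ * ((1/2) * (a + s * u)^2 + g * |a + s * u| - ((1/2) * a^2 + g * |a|) - (s * u) * a)
      = (1/2) * u^2
        + (g / s) * (u * Real.sign a * (if a ≠ 0 then (1:ℝ) else 0)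
            + |u| * (if a = 0 then (1:ℝ) else 0))
        + (s * s)⁻¹ * g * (if a = 0 then (0:ℝ) else R) := by
  have hsne : s ≠ 0 := hs.ne'
  rcases lt_trichotomy a 0 with h | h | h
  · rw [Real.sign_of_neg h, if_pos (show a ≠ 0 from h.ne), if_neg h.ne, if_neg h.ne]
    rw [if_pos h.le, max_eq_left h.le] at hR
    rcases le_total (-(s * u)) a with h2 | h2
    · rw [max_eq_right h2] at hR
      rw [abs_of_nonneg (by linarith : (0:ℝ) ≤ a + s * u), abs_of_neg h, hR]
      field_simp
      ring
    · rw [max_eq_left h2] at hR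
      rw [abs_of_nonpos (by linarith : a + s * u ≤ 0), abs_of_neg h, hR]
      field_simp
      ring
  · subst h
    rw [Real.sign_zero, if_pos rfl, if_neg (by simp), if_pos rfl]
    rw [zero_add, abs_mul, abs_of_pos hs]
    simp only [zero_add, mul_zero, zero_mul, add_zero, abs_zero]
    field_simp
    ring
  · rw [Real.sign_of_pos h, if_pos (show a ≠ 0 from h.ne'), if_neg h.ne', if_neg h.ne']
    rw [if_neg (not_le.mpr h), max_eq_right h.le] at hR
    rcases le_total (-(s * u)) a with h2 | h2
    · rw [max_eq_right h2] at hR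
      rw [abs_of_nonneg (by linarith : (0:ℝ) ≤ a + s * u), abs_of_pos h, hR]
      field_simp
      ring
    · rw [max_eq_left h2] at hR
      rw [abs_of_nonpos (by linarith : a + s * u ≤ 0), abs_of_pos h, hR]
      field_simp
      ring

lemma key2' (s : ℝ) (hs : 0 < s) (a u R : ℝ) (ha : a ≠ 0)
    (hR : R = 2 * ((max (-(s * u)) a - max 0 a) - (if a ≤ 0 then (1:ℝ) else 0) * (-(s * u)))) :
    |R| ≤ 2 * (if 0 < |a| ∧ |a| ≤ s * |u| then (1:ℝ) else 0) * (s * |u| - |a|) := by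
  have h1 : s * u ≤ s * |u| := mul_le_mul_of_nonneg_left (le_abs_self u) hs.le
  have h2 : -(s * u) ≤ s * |u| := by
    have := mul_le_mul_of_nonneg_left (neg_abs_le u) hs.le
    linarith
  rcases lt_trichotomy a 0 with h | h | h
  · rw [if_pos h.le, max_eq_left h.le] at hR
    rw [abs_of_neg h]
    rcases le_total (-(s * u)) a with h3 | h3
    · rw [max_eq_right h3] at hR
      have hRv : R = 2 * (a + s * u) := by rw [hR]; ring
      rw [hRv, abs_of_nonneg (by linarith : (0:ℝ) ≤ 2 * (a + s * u)),
        if_pos ⟨by linarith, by linarith⟩]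
      linarith
    · rw [max_eq_left h3] at hR
      have hRv : R = 0 := by rw [hR]; ring
      rw [hRv, abs_zero]
      split_ifs with h4
      · have := h4.2
        linarith
      · simp
  · exact absurd h ha
  · rw [if_neg (not_le.mpr h), max_eq_right h.le] at hR
    rw [abs_of_pos h]
    rcases le_total (-(s * u)) a with h3 | h3
    · rw [max_eq_right h3] at hR
      have hRv : R = 0 := by rw [hR]; ring
      rw [hRv, abs_zero]
      split_ifs with h4
      · have := h4.2
        linarith
      · simp
    · rw [max_eq_left h3] at hR
      have hRv : R = 2 * (-(s * u) - a) := by rw [hR]; ring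
      rw [hRv, abs_of_nonneg (by linarith : (0:ℝ) ≤ 2 * (-(s * u) - a)),
        if_pos ⟨h, by linarith⟩]
      linarith

/-- STATEMENT 8 (Knight's identity for the localized Bregman divergence of
`½‖·‖₂² + g‖·‖₁`), together with the bound on the remainder terms. -/
theorem stmt8 {d : ℕ} (hd : 1 ≤ d) {γ g : ℝ} (hγ : 0 < γ) (hg : 0 ≤ g)
    (w u : Fin d → ℝ) (R : Fin d → ℝ)
    (hR : ∀ j, R j = 2 * ∫ s in (0:ℝ)..(-(Real.sqrt γ * u j)),
      ((if w j ≤ s then (1:ℝ) else 0) - (if w j ≤ 0 then (1:ℝ) else 0))) :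
    (γ⁻¹ * (((1/2) * ∑ j, (w j + Real.sqrt γ * u j)^2 + g * ∑ j, |w j + Real.sqrt γ * u j|)
        - ((1/2) * ∑ j, (w j)^2 + g * ∑ j, |w j|)
        - ∑ j, (Real.sqrt γ * u j) * w j)
      = (1/2) * ∑ j, (u j)^2
        + (g / Real.sqrt γ) *
            ((∑ j, u j * Real.sign (w j) * (if w j ≠ 0 then (1:ℝ) else 0))
              + ∑ j, |u j| * (if w j = 0 then (1:ℝ) else 0))
        + γ⁻¹ * g * ∑ j, (if w j = 0 then (0:ℝ) else R j)) ∧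
    (∀ j, w j ≠ 0 →
      |R j| ≤ 2 * (if 0 < |w j| ∧ |w j| ≤ Real.sqrt γ * |u j| then (1:ℝ) else 0)
        * (Real.sqrt γ * |u j| - |w j|)) := by
  have hs0 : 0 < Real.sqrt γ := Real.sqrt_pos.mpr hγ
  have hss : Real.sqrt γ * Real.sqrt γ = γ := Real.mul_self_sqrt hγ.le
  have hR' : ∀ j, R j = 2 * ((max (-(Real.sqrt γ * u j)) (w j) - max 0 (w j))
      - (if w j ≤ 0 then (1:ℝ) else 0) * (-(Real.sqrt γ * u j))) := by
    intro j
    rw [hR j, R_eq]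
  constructor
  · have hγinv : γ⁻¹ = (Real.sqrt γ * Real.sqrt γ)⁻¹ := by rw [hss]
    rw [hγinv]
    simp only [Finset.mul_sum, ← Finset.sum_add_distrib, ← Finset.sum_sub_distrib]
    refine Finset.sum_congr rfl fun j _ => ?_
    have := key1' (Real.sqrt γ) g hs0 (w j) (u j) (R j) (hR' j)
    linear_combination this
  · intro j hj
    exact key2' (Real.sqrt γ) hs0 (w j) (u j) (R j) hj (hR' j)
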